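/- Let e > 0 be real. Suppose events E_1, ..., E_n each have probability at most p, each E_i is mutually independent of all but at most D of the other events, and e·p·(D+1) ≤ 1 (symmetric Lovász Local Lemma hypothesis). Then with positive probability none of the events occur. -/

import Mathlib

open MeasureTheory

lemma lll_key (D : ℕ) (p : ℝ) (h : Real.exp 1 * p * ((D:ℝ) + 1) ≤ 1) :
    p ≤ (1/((D:ℝ)+2)) * (1 - 1/((D:ℝ)+2))^D := by
  set d : ℝ := (D:ℝ) with hd
  have hd0 : (0:ℝ) ≤ d := Nat.cast_nonneg D
  have hd1 : 0 < d + 1 := by linarith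
  have hd2 : 0 < d + 2 := by linarith
  have hexp : (1 + 1/(d+1))^(D+1) ≤ Real.exp 1 := by
    have h1 : 1 + 1/(d+1) ≤ Real.exp (1/(d+1)) := by
      have := Real.add_one_le_exp (1/(d+1)); linarith
    calc (1 + 1/(d+1))^(D+1) ≤ Real.exp (1/(d+1)) ^ (D+1) := by
          apply pow_le_pow_left₀ (by positivity) h1
      _ = Real.exp (((D:ℕ)+1 : ℕ) * (1/(d+1))) := by
          rw [Real.exp_nat_mul]
      _ = Real.exp 1 := by
          congr 1
          push_cast
          field_simp
          rw [hd]
  set X : ℝ := (1/(d+2)) * (1 - 1/(d+2))^D with hX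
  have heq : (1 + 1/(d+1))^(D+1) * X * (d+1) = 1 := by
    have e1 : (1 : ℝ) + 1/(d+1) = (d+2)/(d+1) := by field_simp; ring
    have e2 : (1 : ℝ) - 1/(d+2) = (d+1)/(d+2) := by field_simp; ring
    rw [hX, e1, e2, pow_succ]
    have e3 : ((d+2)/(d+1))^D * ((d+1)/(d+2))^D = 1 := by
      rw [← mul_pow]
      have : (d+2)/(d+1) * ((d+1)/(d+2)) = 1 := by field_simp
      rw [this, one_pow]
    field_simp
    nlinarith [e3, sq_nonneg ((d+2)/(d+1))]
  have hXnn : 0 ≤ X := by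
    have : (0:ℝ) ≤ 1 - 1/(d+2) := by
      have : 1/(d+2) ≤ 1 := by rw [div_le_one hd2]; linarith
      linarith
    positivity
  have h1X : 1 ≤ Real.exp 1 * X * (d+1) := by
    calc (1:ℝ) = (1 + 1/(d+1))^(D+1) * X * (d+1) := heq.symm
      _ ≤ Real.exp 1 * X * (d+1) := by
          apply mul_le_mul_of_nonneg_right _ hd1.le
          exact mul_le_mul_of_nonneg_right hexp hXnn
  have hE1 : 0 < Real.exp 1 * (d+1) := by positivity
  have h2 : Real.exp 1 * p * (d+1) ≤ Real.exp 1 * X * (d+1) := le_trans h h1X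
  nlinarith [Real.exp_pos 1]


/-- Symmetric Lovász Local Lemma: if each bad event has probability at most `p`, each is
mutually independent of all but at most `D` of the other events, and `e·p·(D+1) ≤ 1`,
then with positive probability none of the events occur. -/
theorem stmt_16 {Ω : Type*} [MeasurableSpace Ω] (μ : Measure Ω) [IsProbabilityMeasure μ]
    (n : ℕ) (E : Fin n → Set Ω) (hE : ∀ i, MeasurableSet (E i))
    (D : ℕ) (Dep : Fin n → Finset (Fin n)) (hD : ∀ i, (Dep i).card ≤ D)
    (hind : ∀ (i : Fin n) (S : Finset (Fin n)), (∀ j ∈ S, j ∉ Dep i ∧ j ≠ i) →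
      μ (E i ∩ ⋂ j ∈ S, (E j)ᶜ) = μ (E i) * μ (⋂ j ∈ S, (E j)ᶜ))
    (p : ℝ) (hp : ∀ i, (μ (E i)).toReal ≤ p)
    (hlll : Real.exp 1 * p * (D + 1) ≤ 1) :
    0 < μ (⋂ i, (E i)ᶜ) := by
  classical
  set x : ℝ := 1/((D:ℝ)+2) with hxdef
  have hd0 : (0:ℝ) ≤ (D:ℝ) := Nat.cast_nonneg D
  have hx0 : 0 < x := by positivity
  have hx1 : x ≤ 1/2 := by
    rw [hxdef]
    rw [div_le_div_iff₀ (by linarith) (by norm_num)]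
    linarith
  have h1x : (0:ℝ) < 1 - x := by linarith
  have hpx : p ≤ x * (1-x)^D := lll_key D p hlll
  set F : Finset (Fin n) → Set Ω := fun S => ⋂ j ∈ S, (E j)ᶜ with hF
  set f : Finset (Fin n) → ℝ := fun S => (μ (F S)).toReal with hf
  have hfnn : ∀ S, 0 ≤ f S := fun S => ENNReal.toReal_nonneg
  have hmono : ∀ {S T : Finset (Fin n)}, S ⊆ T → F T ⊆ F S := by
    intro S T hST ω hω
    simp only [hF, Set.mem_iInter] at hω ⊢
    exact fun j hj => hω j (hST hj)
  have hsplit : ∀ (i : Fin n) (T : Finset (Fin n)),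
      f (insert i T) = f T - (μ (E i ∩ F T)).toReal := by
    intro i T
    have h1 : F (insert i T) = F T \ E i := by
      simp only [hF, Finset.set_biInter_insert, Set.diff_eq]
      rw [Set.inter_comm]
    have h2 : μ (F T ∩ E i) + μ (F T \ E i) = μ (F T) :=
      measure_inter_add_diff _ (hE i)
    have h3 := congrArg ENNReal.toReal h2
    rw [ENNReal.toReal_add (measure_ne_top μ _) (measure_ne_top μ _)] at h3
    have h4 : E i ∩ F T = F T ∩ E i := Set.inter_comm _ _
    simp only [hf, h1, h4]
    linarith
  have main : ∀ S : Finset (Fin n),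
      0 < f S ∧ ∀ i ∉ S, (μ (E i ∩ F S)).toReal ≤ x * f S := by
    intro S
    induction S using Finset.strongInductionOn with
    | _ S IH =>
    constructor
    · rcases Finset.eq_empty_or_nonempty S with rfl | ⟨i, hi⟩
      · have : F ∅ = Set.univ := by simp [hF]
        simp only [hf, this, measure_univ]
        norm_num
      · obtain ⟨T, hiT, rfl⟩ : ∃ T, i ∉ T ∧ insert i T = S :=
          ⟨S.erase i, Finset.notMem_erase i S, Finset.insert_erase hi⟩
        obtain ⟨hfT, hb⟩ := IH T (Finset.ssubset_insert hiT)
        have hgb := hb i hiT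
        rw [hsplit i T]
        have : 0 < (1-x) * f T := mul_pos h1x hfT
        nlinarith
    · intro i hiS
      set S1 := S ∩ Dep i with hS1
      set S2 := S \ Dep i with hS2
      have hU : S2 ∪ S1 = S := Finset.sdiff_union_inter S (Dep i)
      have peel : ∀ T ⊆ S1, (1-x)^T.card * f S2 ≤ f (S2 ∪ T) := by
        intro T
        induction T using Finset.induction_on with
        | empty => intro _; simp
        | insert _ _ hjT =>
          rename_i j T ih
          intro hsub
          have hjS1 : j ∈ S1 := hsub (Finset.mem_insert_self j T)
          have hTsub : T ⊆ S1 := fun a ha => hsub (Finset.mem_insert_of_mem ha)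
          have hjDep : j ∈ Dep i := (Finset.mem_inter.mp hjS1).2
          have hjS : j ∈ S := (Finset.mem_inter.mp hjS1).1
          have hjT2 : j ∉ S2 ∪ T := by
            intro hmem
            rcases Finset.mem_union.mp hmem with h | h
            · exact (Finset.mem_sdiff.mp h).2 hjDep
            · exact hjT h
          have hsubS : S2 ∪ T ⊆ S := by
            apply Finset.union_subset (Finset.sdiff_subset)
            exact hTsub.trans (Finset.inter_subset_left)
          have hss : S2 ∪ T ⊂ S :=
            (Finset.ssubset_iff_of_subset hsubS).mpr ⟨j, hjS, hjT2⟩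
          obtain ⟨hfpos, hbnd⟩ := IH _ hss
          have h2 := hbnd j hjT2
          have h3 := ih hTsub
          have h1 : S2 ∪ insert j T = insert j (S2 ∪ T) := by ext a; simp [Finset.mem_insert, or_comm, or_left_comm]
          rw [h1, hsplit j (S2 ∪ T)]
          calc (1-x)^(insert j T).card * f S2
              = (1-x) * ((1-x)^T.card * f S2) := by
                rw [Finset.card_insert_of_notMem hjT, pow_succ]; ring
            _ ≤ (1-x) * f (S2 ∪ T) := mul_le_mul_of_nonneg_left h3 h1x.le
            _ ≤ f (S2 ∪ T) - (μ (E j ∩ F (S2 ∪ T))).toReal := by linarith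
      have hpeel := peel S1 (subset_refl _)
      rw [hU] at hpeel
      have hcard : S1.card ≤ D :=
        le_trans (Finset.card_le_card (Finset.inter_subset_right)) (hD i)
      have hDpow : (1-x)^D ≤ (1-x)^S1.card :=
        pow_le_pow_of_le_one h1x.le (by linarith) hcard
      have hSsub : F S ⊆ F S2 := hmono (Finset.sdiff_subset)
      have hgm : μ (E i ∩ F S) ≤ μ (E i ∩ F S2) :=
        measure_mono (Set.inter_subset_inter_right _ hSsub)
      have hindS2 : μ (E i ∩ F S2) = μ (E i) * μ (F S2) := by
        apply hind i S2
        intro j hj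
        refine ⟨(Finset.mem_sdiff.mp hj).2, ?_⟩
        intro h
        exact hiS (h ▸ (Finset.mem_sdiff.mp hj).1)
      have hg : (μ (E i ∩ F S)).toReal ≤ p * f S2 := by
        have t1 : (μ (E i ∩ F S)).toReal ≤ (μ (E i ∩ F S2)).toReal :=
          ENNReal.toReal_mono (measure_ne_top μ _) hgm
        rw [hindS2, ENNReal.toReal_mul] at t1
        exact t1.trans (mul_le_mul_of_nonneg_right (hp i) (hfnn _))
      calc (μ (E i ∩ F S)).toReal ≤ p * f S2 := hg
        _ ≤ (x * (1-x)^D) * f S2 := mul_le_mul_of_nonneg_right hpx (hfnn _)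
        _ = x * ((1-x)^D * f S2) := by ring
        _ ≤ x * ((1-x)^S1.card * f S2) :=
            mul_le_mul_of_nonneg_left (mul_le_mul_of_nonneg_right hDpow (hfnn _)) hx0.le
        _ ≤ x * f S := mul_le_mul_of_nonneg_left hpeel hx0.le
  have hpos := (main Finset.univ).1
  have hEq : F Finset.univ = ⋂ i, (E i)ᶜ := by simp [hF]
  simp only [hf, hEq] at hpos
  exact (ENNReal.toReal_pos_iff.mp hpos).1
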